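/- The function A(b) = sqrt((1/2)·sqrt(1 + 8/b²) + 1/2 − 2/b²) is concave on [1, ∞), and the function b ↦ b·A(b) is also concave on [1, ∞). -/

import Mathlib

open Set Real

/-- inner convex function τ(s) = (√(1+8s²)-1)/2 -/
noncomputable def tauF : ℝ → ℝ := fun s => (Real.sqrt (1 + 8 * s ^ 2) - 1) / 2

/-- outer concave function φ(s) = √(1-s²) -/
noncomputable def phiF : ℝ → ℝ := fun s => Real.sqrt (1 - s ^ 2)

lemma sqrt18_key {x y a b : ℝ} (ha : 0 ≤ a) (hb : 0 ≤ b) (hab : a + b = 1) :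
    Real.sqrt (1 + 8 * (a * x + b * y) ^ 2)
      ≤ a * Real.sqrt (1 + 8 * x ^ 2) + b * Real.sqrt (1 + 8 * y ^ 2) := by
  set X := Real.sqrt (1 + 8 * x ^ 2) with hX
  set Y := Real.sqrt (1 + 8 * y ^ 2) with hY
  have hX0 : 0 ≤ X := Real.sqrt_nonneg _
  have hY0 : 0 ≤ Y := Real.sqrt_nonneg _
  have hX2 : X ^ 2 = 1 + 8 * x ^ 2 := Real.sq_sqrt (by positivity)
  have hY2 : Y ^ 2 = 1 + 8 * y ^ 2 := Real.sq_sqrt (by positivity)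
  have hXY : 1 + 8 * x * y ≤ X * Y := by
    have h1 : (X * Y) ^ 2 = (1 + 8 * x * y) ^ 2 + 8 * (x - y) ^ 2 := by
      rw [mul_pow, hX2, hY2]; ring
    nlinarith [mul_nonneg hX0 hY0, sq_nonneg (x - y), sq_nonneg (X * Y + 1 + 8 * x * y)]
  have hR0 : 0 ≤ a * X + b * Y := by positivity
  have hsq : 1 + 8 * (a * x + b * y) ^ 2 ≤ (a * X + b * Y) ^ 2 := by
    have h2 : 2 * (a * b) * (1 + 8 * x * y) ≤ 2 * (a * b) * (X * Y) := by
      apply mul_le_mul_of_nonneg_left hXY (by positivity)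
    have hexp : (a * X + b * Y) ^ 2 = a ^ 2 * X ^ 2 + 2 * (a * b) * (X * Y) + b ^ 2 * Y ^ 2 := by
      ring
    rw [hX2, hY2] at hexp
    nlinarith [hexp, h2]
  calc Real.sqrt (1 + 8 * (a * x + b * y) ^ 2) ≤ Real.sqrt ((a * X + b * Y) ^ 2) :=
        Real.sqrt_le_sqrt hsq
    _ = a * X + b * Y := Real.sqrt_sq hR0

lemma tauF_convex : ConvexOn ℝ (Icc (0:ℝ) 1) tauF := by
  refine ⟨convex_Icc _ _, fun x _ y _ a b ha hb hab => ?_⟩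
  simp only [smul_eq_mul, tauF]
  have := sqrt18_key (x := x) (y := y) ha hb hab
  linarith

lemma tauF_mono : MonotoneOn tauF (Icc (0:ℝ) 1) := by
  intro x hx y hy hxy
  have : Real.sqrt (1 + 8 * x ^ 2) ≤ Real.sqrt (1 + 8 * y ^ 2) := by
    apply Real.sqrt_le_sqrt; nlinarith [hx.1]
  simp only [tauF]; linarith

lemma tauF_mem {s : ℝ} (hs : s ∈ Icc (0:ℝ) 1) : tauF s ∈ Icc (0:ℝ) 1 := by
  obtain ⟨h0, h1⟩ := hs
  have l1 : (1:ℝ) ≤ Real.sqrt (1 + 8 * s ^ 2) := by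
    have := Real.sqrt_le_sqrt (show (1:ℝ) ≤ 1 + 8 * s ^ 2 by nlinarith)
    simpa using this
  have l2 : Real.sqrt (1 + 8 * s ^ 2) ≤ 3 := by
    have := Real.sqrt_le_sqrt (show (1:ℝ) + 8 * s ^ 2 ≤ 9 by nlinarith)
    rwa [show (9:ℝ) = 3 ^ 2 by norm_num, Real.sqrt_sq (by norm_num : (0:ℝ) ≤ 3)] at this
  constructor <;> simp only [tauF] <;> linarith

lemma phiF_concave : ConcaveOn ℝ (Icc (0:ℝ) 1) phiF := by
  refine ⟨convex_Icc _ _, fun x hx y hy a b ha hb hab => ?_⟩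
  simp only [smul_eq_mul, phiF]
  set X := Real.sqrt (1 - x ^ 2) with hX
  set Y := Real.sqrt (1 - y ^ 2) with hY
  have hX0 : 0 ≤ X := Real.sqrt_nonneg _
  have hY0 : 0 ≤ Y := Real.sqrt_nonneg _
  have hX2 : X ^ 2 = 1 - x ^ 2 := Real.sq_sqrt (by nlinarith [hx.1, hx.2])
  have hY2 : Y ^ 2 = 1 - y ^ 2 := Real.sq_sqrt (by nlinarith [hy.1, hy.2])
  have hXY : X * Y ≤ 1 - x * y := by
    have h1 : (X * Y) ^ 2 = (1 - x * y) ^ 2 - (x - y) ^ 2 := by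
      rw [mul_pow, hX2, hY2]; ring
    have hd : 0 ≤ 1 - x * y := by nlinarith [hx.1, hx.2, hy.1, hy.2]
    nlinarith [h1, mul_nonneg hX0 hY0, hd, sq_nonneg (x - y)]
  have hR0 : 0 ≤ a * X + b * Y := by positivity
  have hsq : (a * X + b * Y) ^ 2 ≤ 1 - (a * x + b * y) ^ 2 := by
    have h2 : 2 * (a * b) * (X * Y) ≤ 2 * (a * b) * (1 - x * y) :=
      mul_le_mul_of_nonneg_left hXY (by positivity)
    have hexp : (a * X + b * Y) ^ 2 = a ^ 2 * X ^ 2 + 2 * (a * b) * (X * Y) + b ^ 2 * Y ^ 2 := by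
      ring
    rw [hX2, hY2] at hexp
    nlinarith [hexp, h2]
  calc a * X + b * Y = Real.sqrt ((a * X + b * Y) ^ 2) := (Real.sqrt_sq hR0).symm
    _ ≤ Real.sqrt (1 - (a * x + b * y) ^ 2) := Real.sqrt_le_sqrt hsq

lemma phiF_anti : AntitoneOn phiF (Icc (0:ℝ) 1) := by
  intro x hx y hy hxy
  apply Real.sqrt_le_sqrt
  nlinarith [hx.1]

/-- concave-antitone composed with convex is concave -/
lemma concave_comp_convex {f g : ℝ → ℝ} {s T : Set ℝ}
    (hmem : ∀ x ∈ s, f x ∈ T) (hg : ConcaveOn ℝ T g) (hg' : AntitoneOn g T)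
    (hf : ConvexOn ℝ s f) : ConcaveOn ℝ s (fun x => g (f x)) := by
  refine ⟨hf.1, fun x hx y hy a b ha hb hab => ?_⟩
  have hmx := hmem x hx
  have hmy := hmem y hy
  have hcomb : a • f x + b • f y ∈ T := hg.1 hmx hmy ha hb hab
  have h1 : g (a • f x + b • f y) ≤ g (f (a • x + b • y)) :=
    hg' (hmem _ (hf.1 hx hy ha hb hab)) hcomb (hf.2 hx hy ha hb hab)
  have h2 : a • g (f x) + b • g (f y) ≤ g (a • f x + b • f y) :=
    hg.2 hmx hmy ha hb hab
  exact h2.trans h1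

/-- convex-monotone composed with convex is convex -/
lemma convex_comp_convex {f g : ℝ → ℝ} {s T : Set ℝ}
    (hmem : ∀ x ∈ s, f x ∈ T) (hg : ConvexOn ℝ T g) (hg' : MonotoneOn g T)
    (hf : ConvexOn ℝ s f) : ConvexOn ℝ s (fun x => g (f x)) := by
  refine ⟨hf.1, fun x hx y hy a b ha hb hab => ?_⟩
  have hmx := hmem x hx
  have hmy := hmem y hy
  have hcomb : a • f x + b • f y ∈ T := hg.1 hmx hmy ha hb hab
  have h1 : g (f (a • x + b • y)) ≤ g (a • f x + b • f y) :=
    hg' (hmem _ (hf.1 hx hy ha hb hab)) hcomb (hf.2 hx hy ha hb hab)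
  have h2 : g (a • f x + b • f y) ≤ a • g (f x) + b • g (f y) :=
    hg.2 hmx hmy ha hb hab
  exact h1.trans h2

lemma inv_convex : ConvexOn ℝ (Ici (1:ℝ)) (fun b => 1 / b) := by
  refine ⟨convex_Ici _, fun x hx y hy a b ha hb hab => ?_⟩
  simp only [smul_eq_mul] at *
  have hx1 : (1:ℝ) ≤ x := hx
  have hy1 : (1:ℝ) ≤ y := hy
  have hx0 : (0:ℝ) < x := by linarith
  have hy0 : (0:ℝ) < y := by linarith
  have hz0 : (0:ℝ) < a * x + b * y := by nlinarith
  have hcomb : a * (1 / x) + b * (1 / y) = (a * y + b * x) / (x * y) := by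
    field_simp
  rw [hcomb, div_le_div_iff₀ hz0 (by positivity)]
  have h2 : x * y * (a + b) ^ 2 = x * y := by rw [hab]; ring
  nlinarith [h2, mul_nonneg (mul_nonneg ha hb) (sq_nonneg (x - y))]

lemma inv_mem {b : ℝ} (hb : b ∈ Ici (1:ℝ)) : 1 / b ∈ Icc (0:ℝ) 1 := by
  have hb1 : (1:ℝ) ≤ b := hb
  have hb0 : (0:ℝ) < b := by linarith
  constructor
  · positivity
  · rw [div_le_one hb0]; exact hb1

/-- perspective: if f is concave on [0,1], then b ↦ b · f(1/b) is concave on [1,∞) -/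
lemma perspective_concave {f : ℝ → ℝ} (hf : ConcaveOn ℝ (Icc (0:ℝ) 1) f) :
    ConcaveOn ℝ (Ici (1:ℝ)) (fun b => b * f (1 / b)) := by
  refine ⟨convex_Ici _, fun x hx y hy a b ha hb hab => ?_⟩
  simp only [smul_eq_mul]
  have hx1 : (1:ℝ) ≤ x := hx
  have hy1 : (1:ℝ) ≤ y := hy
  have hx0 : (0:ℝ) < x := by linarith
  have hy0 : (0:ℝ) < y := by linarith
  set z := a * x + b * y with hz
  have hz1 : (1:ℝ) ≤ z := by nlinarith
  have hz0 : (0:ℝ) < z := by linarith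
  have ha' : 0 ≤ a * x / z := by positivity
  have hb' : 0 ≤ b * y / z := by positivity
  have hab' : a * x / z + b * y / z = 1 := by field_simp; exact hz.symm
  have hkey : (a * x / z) • (1 / x) + (b * y / z) • (1 / y) = 1 / z := by
    simp only [smul_eq_mul]
    have e : a * x / z * (1 / x) + b * y / z * (1 / y) = (a + b) / z := by
      field_simp [hx0.ne', hy0.ne', hz0.ne']
    rw [e, hab]
  have h := hf.2 (inv_mem hx) (inv_mem hy) ha' hb' hab'
  rw [hkey] at h
  simp only [smul_eq_mul] at h
  have hsum : a * x / z * f (1 / x) + b * y / z * f (1 / y)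
      = (a * (x * f (1 / x)) + b * (y * f (1 / y))) / z := by ring
  rw [hsum, div_le_iff₀ hz0] at h
  calc a * (x * f (1 / x)) + b * (y * f (1 / y)) ≤ f (1 / z) * z := h
    _ = z * f (1 / z) := by ring

lemma concave_congr {f g : ℝ → ℝ} {s : Set ℝ} (h : ∀ x ∈ s, f x = g x)
    (hf : ConcaveOn ℝ s f) : ConcaveOn ℝ s g := by
  refine ⟨hf.1, fun x hx y hy a b ha hb hab => ?_⟩
  rw [← h x hx, ← h y hy, ← h _ (hf.1 hx hy ha hb hab)]
  exact hf.2 hx hy ha hb hab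

/-- The key algebraic identity: A(b) = φ(τ(1/b)) for b ≥ 1. -/
lemma A_eq {b : ℝ} (hb : (1:ℝ) ≤ b) :
    Real.sqrt ((1 / 2) * Real.sqrt (1 + 8 / b ^ 2) + 1 / 2 - 2 / b ^ 2)
      = phiF (tauF (1 / b)) := by
  have hb0 : (0:ℝ) < b := by linarith
  have harg : (1 : ℝ) + 8 * (1 / b) ^ 2 = 1 + 8 / b ^ 2 := by
    field_simp
  simp only [phiF, tauF, harg]
  congr 1
  have hu : Real.sqrt (1 + 8 / b ^ 2) ^ 2 = 1 + 8 / b ^ 2 :=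
    Real.sq_sqrt (by positivity)
  set u := Real.sqrt (1 + 8 / b ^ 2)
  linear_combination hu / 4

theorem A_concavity (A : ℝ → ℝ)
    (hA : ∀ b : ℝ, A b = Real.sqrt ((1 / 2) * Real.sqrt (1 + 8 / b ^ 2) + 1 / 2 - 2 / b ^ 2)) :
    ConcaveOn ℝ (Set.Ici 1) A ∧ ConcaveOn ℝ (Set.Ici 1) (fun b => b * A b) := by
  have hAeq : ∀ b ∈ Ici (1:ℝ), phiF (tauF (1 / b)) = A b := by
    intro b hb
    rw [hA b, A_eq hb]
  constructor
  · -- A = φ ∘ τ ∘ inv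
    have ht : ConvexOn ℝ (Ici (1:ℝ)) (fun b => tauF (1 / b)) :=
      convex_comp_convex (fun b hb => inv_mem hb) tauF_convex tauF_mono inv_convex
    have hcomp : ConcaveOn ℝ (Ici (1:ℝ)) (fun b => phiF (tauF (1 / b))) :=
      concave_comp_convex (fun b hb => tauF_mem (inv_mem hb)) phiF_concave phiF_anti ht
    exact concave_congr hAeq hcomp
  · -- b * A b = b * (φ∘τ)(1/b), a perspective of the concave function φ∘τ
    have hAt : ConcaveOn ℝ (Icc (0:ℝ) 1) (fun s => phiF (tauF s)) :=
      concave_comp_convex (fun s hs => tauF_mem hs) phiF_concave phiF_anti tauF_convex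
    have hpersp := perspective_concave hAt
    apply concave_congr (f := fun b => b * phiF (tauF (1 / b))) ?_ hpersp
    intro b hb
    show b * phiF (tauF (1 / b)) = b * A b
    rw [hAeq b hb]
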